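/- With i.i.d. Exp(λ) interdistances, coverage radius R, and τ_n the hop lengths of the shortest path as above, the conditional CDF of τ_n given τ_{n-1} = x_{n-1} ≤ R satisfies: for R - x_{n-1} ≤ x_n ≤ R, F_{τ_n|τ_{n-1}}(x_n, x_{n-1}) = e^{-λ(R - x_n)} - e^{-λ x_{n-1}}, and for x_n ≥ R, F_{τ_n|τ_{n-1}}(x_n, x_{n-1}) = 1 - e^{-λ(x_n - (R - x_{n-1}))}. -/

import Mathlib

open MeasureTheory

section Stmt14AuxSection
open Real Set ProbabilityTheory
open scoped ENNReal
namespace Stmt14Aux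


noncomputable def gfun (lam : ℝ) (k : ℕ) (t : ℝ) (s : ℝ) : ℝ≥0∞ :=
  if s ≤ t then ENNReal.ofReal ((t - s) ^ k * Real.exp (lam * s)) else 0

lemma gfun_measurable (lam : ℝ) (k : ℕ) (t : ℝ) : Measurable (gfun lam k t) := by
  unfold gfun
  apply Measurable.ite measurableSet_Iic
  · exact (((measurable_const.sub measurable_id).pow_const k).mul
      ((measurable_id.const_mul lam).exp)).ennreal_ofReal
  · exact measurable_const

lemma expMeasure_Iic {lam : ℝ} (hlam : 0 < lam) (c : ℝ) :
    expMeasure lam (Iic c) = ENNReal.ofReal (if 0 ≤ c then 1 - Real.exp (-(lam * c)) else 0) := by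
  rw [← lintegral_exponentialPDF_eq_antiDeriv hlam c, expMeasure, gammaMeasure,
    withDensity_apply _ measurableSet_Iic]
  rfl

lemma map_eq_expMeasure {Ω : Type*} [MeasurableSpace Ω] (μ : Measure Ω) [IsProbabilityMeasure μ]
    {lam : ℝ} (hlam : 0 < lam) (f : Ω → ℝ) (hf : Measurable f)
    (hCDF : ∀ x : ℝ, 0 ≤ x → (μ {ω | f ω ≤ x}).toReal = 1 - Real.exp (-(lam * x)))
    (hneg : ∀ x : ℝ, x < 0 → μ {ω | f ω ≤ x} = 0) :
    Measure.map f μ = expMeasure lam := by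
  haveI := isProbabilityMeasure_expMeasure hlam
  refine Measure.ext_of_Iic _ _ (fun x => ?_)
  rw [Measure.map_apply hf measurableSet_Iic]
  rw [expMeasure_Iic hlam]
  by_cases hx : 0 ≤ x
  · rw [if_pos hx, ← hCDF x hx, ENNReal.ofReal_toReal (measure_ne_top μ _)]
    rfl
  · rw [if_neg hx, ENNReal.ofReal_zero]
    exact hneg x (lt_of_not_ge hx)

lemma expMeasure_Ioi {lam : ℝ} (hlam : 0 < lam) {c : ℝ} (hc : 0 ≤ c) :
    expMeasure lam (Ioi c) = ENNReal.ofReal (Real.exp (-(lam * c))) := by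
  haveI := isProbabilityMeasure_expMeasure hlam
  have h1 : expMeasure lam (Iic c) = ENNReal.ofReal (1 - Real.exp (-(lam * c))) := by
    rw [expMeasure_Iic hlam, if_pos hc]
  have h2 := measure_compl (μ := expMeasure lam) (measurableSet_Iic (a := c))
    (measure_ne_top _ _)
  rw [compl_Iic] at h2
  rw [h2, measure_univ, h1]
  have he1 : Real.exp (-(lam * c)) ≤ 1 := by
    apply Real.exp_le_one_iff.2
    nlinarith
  rw [← ENNReal.ofReal_one, ← ENNReal.ofReal_sub _ (by linarith [Real.exp_pos (-(lam * c))])]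
  norm_num


lemma lintegral_gfun_shift {lam : ℝ} (hlam : 0 < lam) (k : ℕ) (t s : ℝ) :
    ∫⁻ u, gfun lam k t (s + u) ∂(expMeasure lam)
      = ENNReal.ofReal (lam / (k + 1)) * gfun lam (k + 1) t s := by
  have hpdf : Measurable (gammaPDF 1 lam) := (measurable_gammaPDFReal 1 lam).ennreal_ofReal
  have hg : Measurable (fun u => gfun lam k t (s + u)) :=
    (gfun_measurable lam k t).comp (measurable_const.add measurable_id)
  rw [expMeasure, gammaMeasure, lintegral_withDensity_eq_lintegral_mul _ hpdf hg]
  have hptw : (fun u => (gammaPDF 1 lam * fun u => gfun lam k t (s + u)) u)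
      = Set.indicator (Icc 0 (t - s))
          (fun u => ENNReal.ofReal (lam * (t - s - u) ^ k * Real.exp (lam * s))) := by
    funext u
    simp only [Pi.mul_apply]
    by_cases hu : 0 ≤ u
    · by_cases hut : u ≤ t - s
      · rw [Set.indicator_of_mem (Set.mem_Icc.mpr ⟨hu, hut⟩)]
        have h1 : gammaPDF 1 lam u = ENNReal.ofReal (lam * Real.exp (-(lam * u))) := by
          have := exponentialPDF_of_nonneg (r := lam) hu
          rw [← this]; rfl
        have h2 : gfun lam k t (s + u) = ENNReal.ofReal ((t - s - u) ^ k * Real.exp (lam * (s + u))) := by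
          unfold gfun
          rw [if_pos (by linarith)]
          ring_nf
        rw [h1, h2, ← ENNReal.ofReal_mul (by positivity)]
        congr 1
        rw [show lam * (s + u) = lam * s + lam * u by ring, Real.exp_add, Real.exp_neg]
        have := Real.exp_ne_zero (lam * u)
        field_simp
      · rw [Set.indicator_of_notMem (fun h => hut h.2)]
        have : gfun lam k t (s + u) = 0 := by
          unfold gfun; rw [if_neg (by intro h; exact hut (by linarith))]
        rw [this, mul_zero]
    · rw [Set.indicator_of_notMem (fun h => hu h.1)]
      have : gammaPDF 1 lam u = 0 := gammaPDF_of_neg (lt_of_not_ge hu)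
      rw [this, zero_mul]
  rw [lintegral_congr (fun u => congrFun hptw u), lintegral_indicator measurableSet_Icc _]
  by_cases hst : s ≤ t
  · set r := t - s with hr
    have hr0 : 0 ≤ r := by simp [hr]; linarith
    have hint : IntegrableOn (fun u => lam * (r - u) ^ k * Real.exp (lam * s)) (Icc 0 r) volume := by
      apply Continuous.integrableOn_Icc
      continuity
    rw [← ofReal_integral_eq_lintegral_ofReal hint]
    · have hval : ∫ u in Icc 0 r, lam * (r - u) ^ k * Real.exp (lam * s)
          = lam * Real.exp (lam * s) * (r ^ (k + 1) / (k + 1)) := by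
        rw [integral_Icc_eq_integral_Ioc, ← intervalIntegral.integral_of_le hr0]
        have : ∀ u, lam * (r - u) ^ k * Real.exp (lam * s)
            = (lam * Real.exp (lam * s)) * (r - u) ^ k := by intro u; ring
        simp only [this]
        rw [intervalIntegral.integral_const_mul]
        congr 1
        rw [intervalIntegral.integral_comp_sub_left (fun x => x ^ k) r]
        simp [integral_pow]
      rw [hval]
      unfold gfun
      rw [if_pos hst, ← ENNReal.ofReal_mul (by positivity)]
      congr 1
      push_cast
      field_simp
      ring
    · apply (ae_restrict_iff' measurableSet_Icc).2
      apply ae_of_all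
      intro u hu
      have h : 0 ≤ r - u := by linarith [hu.2]
      positivity
  · have hereempty : Icc (0:ℝ) (t - s) = ∅ := Icc_eq_empty (by intro h; exact hst (by linarith))
    rw [hereempty]
    simp only [Measure.restrict_empty, lintegral_zero_measure]
    have : gfun lam (k+1) t s = 0 := by unfold gfun; rw [if_neg hst]
    rw [this, mul_zero]


lemma lintegral_gfun_law {lam : ℝ} (hlam : 0 < lam) (ν : ℕ → Measure ℝ)
    (hν0 : ν 0 = expMeasure lam)
    (hνs : ∀ n, ν (n + 1)
      = Measure.map (fun p : ℝ × ℝ => p.1 + p.2) ((ν n).prod (expMeasure lam))) :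
    ∀ n k (t : ℝ), 0 ≤ t →
      ∫⁻ s, gfun lam k t s ∂(ν n)
        = ENNReal.ofReal (lam ^ (n + 1) * t ^ (n + k + 1) * (k.factorial) / ((n + k + 1).factorial)) := by
  haveI := isProbabilityMeasure_expMeasure hlam
  intro n
  induction n with
  | zero =>
    intro k t ht
    rw [hν0]
    have h := lintegral_gfun_shift hlam k t 0
    simp only [zero_add] at h
    rw [h]
    have hg : gfun lam (k + 1) t 0 = ENNReal.ofReal (t ^ (k + 1)) := by
      unfold gfun
      rw [if_pos ht]
      norm_num
    rw [hg, ← ENNReal.ofReal_mul (by positivity)]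
    congr 1
    have hk : ((k + 1 : ℕ) : ℝ) ≠ 0 := by positivity
    rw [Nat.factorial_succ]
    push_cast
    field_simp
    ring
  | succ n ih =>
    intro k t ht
    rw [hνs n, lintegral_map (gfun_measurable lam k t) measurable_add]
    rw [lintegral_prod (fun p : ℝ × ℝ => gfun lam k t (p.1 + p.2))
      (((gfun_measurable lam k t).comp measurable_add).aemeasurable)]
    have hinner : ∀ s : ℝ, ∫⁻ u, gfun lam k t ((s, u).1 + (s, u).2) ∂(expMeasure lam)
        = ENNReal.ofReal (lam / (k + 1)) * gfun lam (k + 1) t s := fun s =>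
      lintegral_gfun_shift hlam k t s
    simp only [hinner]
    rw [lintegral_const_mul _ (gfun_measurable lam (k + 1) t), ih (k + 1) t ht,
      ← ENNReal.ofReal_mul (by positivity)]
    congr 1
    have h1 : n + (k + 1) + 1 = n + k + 2 := by omega
    have h2 : n + 1 + k + 1 = n + k + 2 := by omega
    rw [h1, h2, Nat.factorial_succ (n + k + 1), Nat.factorial_succ k]
    have hk : ((k : ℝ) + 1) ≠ 0 := by positivity
    have hf : ((n + k + 1).factorial : ℝ) ≠ 0 := by positivity
    push_cast
    field_simp
    ring

end Stmt14Aux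
end Stmt14AuxSection


/-- Position of the `n`-th vehicle: partial sum of the gaps. -/
def vehiclePos {Ω : Type*} (J : ℕ → Ω → ℝ) (n : ℕ) (ω : Ω) : ℝ :=
  ∑ i ∈ Finset.range (n + 1), J i ω

open Classical in
/-- Next-hop distance for the shortest-path sampling rule: the farthest vehicle
within coverage `R` if there is one, else the first vehicle. -/
noncomputable def nextHop {Ω : Type*} (J : ℕ → Ω → ℝ) (R : ℝ) (ω : Ω) : ℝ :=
  if ∃ n, vehiclePos J n ω ≤ R then
    sSup {y | (∃ n, y = vehiclePos J n ω) ∧ y ≤ R}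
  else vehiclePos J 0 ω

/-- Conditional CDF of the next hop `τ_n` given the previous hop `τ_{n-1} = x_{n-1} ≤ R`
in the Poisson model: given the previous hop, the first gap ahead is (by memorylessness)
`(R - x_{n-1})` plus a fresh `Exp(λ)` variable, the later gaps are i.i.d. `Exp(λ)`, and
then `F_{τ_n|τ_{n-1}}(x_n, x_{n-1}) = e^{-λ(R-x_n)} - e^{-λ x_{n-1}}` for
`R - x_{n-1} ≤ x_n ≤ R`, while `F_{τ_n|τ_{n-1}}(x_n, x_{n-1}) = 1 - e^{-λ(x_n-(R-x_{n-1}))}`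
for `x_n ≥ R`. -/
theorem stmt14 {Ω : Type*} [MeasurableSpace Ω] (μ : Measure Ω) [IsProbabilityMeasure μ]
    (lam R xp : ℝ) (hlam : 0 < lam) (hR : 0 < R) (hxp0 : 0 ≤ xp) (hxpR : xp ≤ R)
    (I : ℕ → Ω → ℝ) (hmeas : ∀ n, Measurable (I n))
    (hindep : ProbabilityTheory.iIndepFun I μ)
    (hCDF : ∀ n, ∀ x : ℝ, 0 ≤ x →
      (μ {ω | I n ω ≤ x}).toReal = 1 - Real.exp (-(lam * x)))
    (hCDFneg : ∀ n, ∀ x : ℝ, x < 0 → μ {ω | I n ω ≤ x} = 0)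
    (J : ℕ → Ω → ℝ)
    (hJ : ∀ ω, J 0 ω = (R - xp) + I 0 ω) (hJ' : ∀ n ω, J (n + 1) ω = I (n + 1) ω) :
    (∀ y : ℝ, R - xp ≤ y → y ≤ R →
      (μ {ω | nextHop J R ω ≤ y}).toReal
        = Real.exp (-(lam * (R - y))) - Real.exp (-(lam * xp)))
    ∧ (∀ y : ℝ, R ≤ y →
      (μ {ω | nextHop J R ω ≤ y}).toReal
        = 1 - Real.exp (-(lam * (y - (R - xp))))) := by
  classical
  set S : ℕ → Ω → ℝ := fun n ω => ∑ i ∈ Finset.range (n + 1), I i ω with hSdef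
  have hSmeas : ∀ n, Measurable (S n) := fun n => Finset.measurable_sum _ (fun i _ => hmeas i)
  have hS0 : ∀ ω, S 0 ω = I 0 ω := by
    intro ω
    simp only [hSdef, zero_add, Finset.sum_range_one]
  have hSsucc : ∀ n ω, S (n + 1) ω = S n ω + I (n + 1) ω := by
    intro n ω
    simp only [hSdef]
    exact Finset.sum_range_succ _ _
  have hposn : ∀ n ω, vehiclePos J n ω = (R - xp) + S n ω := by
    intro n ω
    induction n with
    | zero =>
      simp only [vehiclePos, zero_add, Finset.sum_range_one, hJ ω, hS0]
    | succ m ihm =>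
      have h1 : vehiclePos J (m + 1) ω = vehiclePos J m ω + J (m + 1) ω := by
        simp only [vehiclePos]
        exact Finset.sum_range_succ _ _
      rw [h1, ihm, hJ' m ω, hSsucc]
      ring
  set G : Set Ω := {ω | ∀ n, 0 ≤ I n ω} with hGdef
  have hGmeas : MeasurableSet G := by
    have h : G = ⋂ n, {ω | 0 ≤ I n ω} := by ext ω; simp [hGdef, Set.mem_iInter]
    rw [h]
    exact MeasurableSet.iInter (fun n => measurableSet_le measurable_const (hmeas n))
  have hGc : μ Gᶜ = 0 := by
    have hsub : Gᶜ ⊆ ⋃ n, ⋃ k : ℕ, {ω | I n ω ≤ -(1 / (k + 1))} := by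
      intro ω hω
      simp only [hGdef, Set.mem_compl_iff, Set.mem_setOf_eq, not_forall, not_le] at hω
      obtain ⟨n, hn⟩ := hω
      obtain ⟨k, hk⟩ := exists_nat_one_div_lt (neg_pos.mpr hn)
      refine Set.mem_iUnion.2 ⟨n, Set.mem_iUnion.2 ⟨k, ?_⟩⟩
      simp only [Set.mem_setOf_eq]
      linarith
    refine measure_mono_null hsub (measure_iUnion_null fun n => measure_iUnion_null fun k => ?_)
    refine hCDFneg n _ ?_
    have : (0:ℝ) < 1 / (k + 1) := by positivity
    linarith
  have hmono : ∀ ω, ω ∈ G → Monotone (fun n => S n ω) := by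
    intro ω hω
    apply monotone_nat_of_le_succ
    intro n
    have h2 : 0 ≤ I (n + 1) ω := hω (n + 1)
    have h3 := hSsucc n ω
    show S n ω ≤ S (n + 1) ω
    linarith
  have hYbdd : ∀ ω : Ω, BddAbove {z | (∃ n, z = vehiclePos J n ω) ∧ z ≤ R} :=
    fun ω => ⟨R, fun z hz => hz.2⟩
  -- Part 2
  have part2 : ∀ y : ℝ, R ≤ y → (μ {ω | nextHop J R ω ≤ y}).toReal
      = 1 - Real.exp (-(lam * (y - (R - xp)))) := by
    intro y hy
    have key2 : ∀ ω ∈ G, (nextHop J R ω ≤ y ↔ I 0 ω ≤ y - (R - xp)) := by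
      intro ω hω
      unfold nextHop
      by_cases hex : ∃ n, vehiclePos J n ω ≤ R
      · rw [if_pos hex]
        constructor
        · intro _
          obtain ⟨m, hm⟩ := hex
          rw [hposn] at hm
          have h0m : S 0 ω ≤ S m ω := hmono ω hω (Nat.zero_le m)
          have := hS0 ω
          linarith
        · intro _
          obtain ⟨m, hm⟩ := hex
          have hne : {z | (∃ n, z = vehiclePos J n ω) ∧ z ≤ R}.Nonempty :=
            ⟨vehiclePos J m ω, ⟨m, rfl⟩, hm⟩
          exact csSup_le hne (fun z hz => le_trans hz.2 hy)
      · rw [if_neg hex, hposn]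
        have := hS0 ω
        constructor <;> intro h <;> linarith
    have hset : {ω | nextHop J R ω ≤ y} ∩ G = {ω | I 0 ω ≤ y - (R - xp)} ∩ G := by
      ext ω
      simp only [Set.mem_inter_iff, Set.mem_setOf_eq]
      constructor
      · rintro ⟨h1, h2⟩; exact ⟨(key2 ω h2).1 h1, h2⟩
      · rintro ⟨h1, h2⟩; exact ⟨(key2 ω h2).2 h1, h2⟩
    have hμeq : μ {ω | nextHop J R ω ≤ y} = μ {ω | I 0 ω ≤ y - (R - xp)} := by
      rw [← measure_inter_conull (s := {ω | nextHop J R ω ≤ y}) hGc, hset,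
        measure_inter_conull hGc]
    rw [hμeq]
    exact hCDF 0 _ (by linarith)
  -- Part 1
  have part1 : ∀ y : ℝ, R - xp ≤ y → y ≤ R → (μ {ω | nextHop J R ω ≤ y}).toReal
      = Real.exp (-(lam * (R - y))) - Real.exp (-(lam * xp)) := by
    intro y hy1 hy2
    set a : ℝ := y - (R - xp) with ha
    have ha0 : 0 ≤ a := by rw [ha]; linarith
    have hab : a ≤ xp := by rw [ha]; linarith
    have hIle : ∀ i (x : ℝ), 0 ≤ x →
        μ {ω | I i ω ≤ x} = ENNReal.ofReal (1 - Real.exp (-(lam * x))) := by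
      intro i x hx
      conv_lhs => rw [← ENNReal.ofReal_toReal (measure_ne_top μ _)]
      rw [hCDF i x hx]
    have hBig : μ (G ∩ {ω | ∀ n, S n ω ≤ a}) = 0 := by
      set c : ENNReal := ENNReal.ofReal (1 - Real.exp (-(lam * a))) with hc
      have hexp1 : Real.exp (-(lam * a)) ≤ 1 := by
        apply Real.exp_le_one_iff.2
        nlinarith
      have hc1 : c < 1 := by
        rw [hc, show (1 : ENNReal) = ENNReal.ofReal 1 by simp,
          ENNReal.ofReal_lt_ofReal_iff_of_nonneg (by linarith)]
        linarith [Real.exp_pos (-(lam * a))]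
      have hsub : ∀ n : ℕ, (G ∩ {ω | ∀ m, S m ω ≤ a})
          ⊆ ⋂ i ∈ Finset.range (n + 1), {ω | I i ω ≤ a} := by
        intro n ω hω
        simp only [Set.mem_iInter, Set.mem_setOf_eq]
        intro i hi
        have h1 : I i ω ≤ S n ω :=
          Finset.single_le_sum (f := fun j => I j ω) (fun j _ => hω.1 j) hi
        exact le_trans h1 (hω.2 n)
      have hprod : ∀ n : ℕ, μ (⋂ i ∈ Finset.range (n + 1), {ω | I i ω ≤ a}) = c ^ (n + 1) := by
        intro n
        rw [hindep.meas_biInter (S := Finset.range (n + 1)) (s := fun i => {ω | I i ω ≤ a})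
          (fun i _ => ⟨Set.Iic a, measurableSet_Iic, rfl⟩)]
        rw [Finset.prod_congr rfl (fun i _ => hIle i a ha0)]
        simp [hc, Finset.prod_const, Finset.card_range]
      have hle : ∀ n : ℕ, μ (G ∩ {ω | ∀ m, S m ω ≤ a}) ≤ c ^ (n + 1) := fun n =>
        (hprod n) ▸ measure_mono (hsub n)
      have htend : Filter.Tendsto (fun n : ℕ => c ^ (n + 1)) Filter.atTop (nhds 0) :=
        (ENNReal.tendsto_pow_atTop_nhds_zero_of_lt_one hc1).comp (Filter.tendsto_add_atTop_nat 1)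
      exact le_zero_iff.1 (ge_of_tendsto' htend hle)
    set H : Set Ω := {ω | ∃ n, a < S n ω} with hH
    have hHmeas : MeasurableSet H := by
      have h : H = ⋃ n, {ω | a < S n ω} := by ext ω; simp [hH]
      rw [h]
      exact MeasurableSet.iUnion (fun n => measurableSet_lt measurable_const (hSmeas n))
    have hG'c : μ (G ∩ H)ᶜ = 0 := by
      have hcompl : (G ∩ H)ᶜ = Gᶜ ∪ (G ∩ Hᶜ) := by
        ext ω
        by_cases hg : ω ∈ G <;> simp [Set.mem_compl_iff, hg]
      rw [hcompl]
      apply measure_union_null hGc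
      have h2 : G ∩ Hᶜ = G ∩ {ω | ∀ n, S n ω ≤ a} := by
        ext ω
        simp [hH, not_exists, not_lt]
      rw [h2]
      exact hBig
    -- pointwise characterization on G ∩ H
    have key1 : ∀ ω ∈ G ∩ H, (nextHop J R ω ≤ y ↔ ∃ n, S n ω ≤ a ∧ xp < S (n + 1) ω) := by
      rintro ω ⟨hωG, hωH⟩
      have hmonoω := hmono ω hωG
      have hEx : ∃ n, a < S n ω := hωH
      constructor
      · intro h
        by_cases hex : ∃ n, vehiclePos J n ω ≤ R
        · unfold nextHop at h
          rw [if_pos hex] at h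
          obtain ⟨m, hm⟩ := hex
          have hSm : S m ω ≤ xp := by rw [hposn] at hm; linarith
          have hS0xp : S 0 ω ≤ xp := le_trans (hmonoω (Nat.zero_le m)) hSm
          have hpos0R : vehiclePos J 0 ω ≤ R := by rw [hposn]; linarith
          have h0y : vehiclePos J 0 ω ≤ y :=
            le_trans (le_csSup (hYbdd ω) ⟨⟨0, rfl⟩, hpos0R⟩) h
          have hS0a : S 0 ω ≤ a := by rw [hposn] at h0y; linarith
          have hfind := Nat.find_spec hEx
          have hN0 : Nat.find hEx ≠ 0 := by
            intro h0
            rw [h0] at hfind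
            exact absurd hfind (not_lt.2 hS0a)
          obtain ⟨n, hn⟩ := Nat.exists_eq_succ_of_ne_zero hN0
          refine ⟨n, not_lt.1 (Nat.find_min hEx (by omega)), ?_⟩
          by_contra hcon
          push_neg at hcon
          have hposn1 : vehiclePos J (n + 1) ω ≤ R := by rw [hposn]; linarith
          have hny : vehiclePos J (n + 1) ω ≤ y :=
            le_trans (le_csSup (hYbdd ω) ⟨⟨n + 1, rfl⟩, hposn1⟩) h
          rw [hposn] at hny
          rw [hn] at hfind
          linarith
        · exfalso
          unfold nextHop at h
          rw [if_neg hex] at h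
          exact hex ⟨0, le_trans h hy2⟩
      · rintro ⟨n, hn1, hn2⟩
        have hS0n : S 0 ω ≤ S n ω := hmonoω (Nat.zero_le n)
        have hex : ∃ m, vehiclePos J m ω ≤ R := ⟨0, by rw [hposn]; linarith⟩
        unfold nextHop
        rw [if_pos hex]
        obtain ⟨m0, hm0⟩ := hex
        refine csSup_le ⟨vehiclePos J m0 ω, ⟨m0, rfl⟩, hm0⟩ ?_
        rintro z ⟨⟨m, rfl⟩, hzR⟩
        have hSm : S m ω ≤ xp := by rw [hposn] at hzR; linarith
        by_cases hmn : m ≤ n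
        · have : S m ω ≤ S n ω := hmonoω hmn
          rw [hposn]; linarith
        · exfalso
          have : S (n + 1) ω ≤ S m ω := hmonoω (by omega)
          linarith
    set C : ℕ → Set Ω := fun n => {ω | S n ω ≤ a ∧ xp < S (n + 1) ω} with hC
    have hCmeas : ∀ n, MeasurableSet (C n) := fun n =>
      (measurableSet_le (hSmeas n) measurable_const).inter
        (measurableSet_lt measurable_const (hSmeas (n + 1)))
    have hG'meas : MeasurableSet (G ∩ H) := hGmeas.inter hHmeas
    have hdisjkey : ∀ p q : ℕ, p < q → Disjoint (C p ∩ (G ∩ H)) (C q ∩ (G ∩ H)) := by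
      intro p q hpq
      rw [Set.disjoint_left]
      rintro ω ⟨hCp, hωG, -⟩ ⟨hCq, -, -⟩
      have hmono' : S (p + 1) ω ≤ S q ω := hmono ω hωG (by omega)
      have h1 : xp < S (p + 1) ω := hCp.2
      have h2 : S q ω ≤ a := hCq.1
      linarith
    have hdisj : Pairwise (Function.onFun Disjoint (fun n => C n ∩ (G ∩ H))) := by
      intro p q hpq
      rcases hpq.lt_or_gt with h | h
      · exact hdisjkey p q h
      · exact (hdisjkey q p h).symm
    have hEset : {ω | nextHop J R ω ≤ y} ∩ (G ∩ H) = ⋃ n, (C n ∩ (G ∩ H)) := by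
      ext ω
      simp only [Set.mem_inter_iff, Set.mem_iUnion, Set.mem_setOf_eq, hC]
      constructor
      · rintro ⟨h1, h2⟩
        obtain ⟨n, hn⟩ := (key1 ω h2).1 h1
        exact ⟨n, hn, h2⟩
      · rintro ⟨n, hn, h2⟩
        exact ⟨(key1 ω h2).2 ⟨n, hn⟩, h2⟩
    have hμE : μ {ω | nextHop J R ω ≤ y} = ∑' n, μ (C n) := by
      rw [← measure_inter_conull (s := {ω | nextHop J R ω ≤ y}) hG'c, hEset,
        measure_iUnion hdisj (fun n => (hCmeas n).inter hG'meas)]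
      exact tsum_congr (fun n => measure_inter_conull hG'c)
    -- laws
    haveI := ProbabilityTheory.isProbabilityMeasure_expMeasure hlam
    have hSum_eq : ∀ n, S n = ∑ i ∈ Finset.range (n + 1), I i := by
      intro n
      funext ω
      exact (Finset.sum_apply ω (Finset.range (n + 1)) I).symm
    have hIndepSn : ∀ n, ProbabilityTheory.IndepFun (S n) (I (n + 1)) μ := by
      intro n
      have h := hindep.indepFun_finsetSum_of_notMem hmeas
        (Finset.notMem_range_self (n := n + 1))
      rwa [← hSum_eq n] at h
    have hmapI : ∀ n, Measure.map (I n) μ = ProbabilityTheory.expMeasure lam :=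
      fun n => Stmt14Aux.map_eq_expMeasure μ hlam (I n) (hmeas n) (hCDF n) (hCDFneg n)
    have hpairlaw : ∀ n, Measure.map (fun ω => (S n ω, I (n + 1) ω)) μ
        = (Measure.map (S n) μ).prod (ProbabilityTheory.expMeasure lam) := by
      intro n
      rw [(ProbabilityTheory.indepFun_iff_map_prod_eq_prod_map_map (hSmeas n).aemeasurable
        (hmeas (n + 1)).aemeasurable).1 (hIndepSn n), hmapI (n + 1)]
    have hν0 : Measure.map (S 0) μ = ProbabilityTheory.expMeasure lam := by
      have h : S 0 = I 0 := funext hS0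
      rw [h]
      exact hmapI 0
    have hνs : ∀ n, Measure.map (S (n + 1)) μ = Measure.map (fun p : ℝ × ℝ => p.1 + p.2)
        ((Measure.map (S n) μ).prod (ProbabilityTheory.expMeasure lam)) := by
      intro n
      rw [← hpairlaw n, Measure.map_map measurable_add ((hSmeas n).prodMk (hmeas (n + 1)))]
      congr 1
      funext ω
      exact hSsucc n ω
    have hlaw := Stmt14Aux.lintegral_gfun_law hlam (fun n => Measure.map (S n) μ) hν0 hνs
    have hμC : ∀ n : ℕ, μ (C n) = ENNReal.ofReal
        (Real.exp (-(lam * xp)) * (lam ^ (n + 1) * a ^ (n + 1) / ((n + 1).factorial))) := by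
      intro n
      have hT : MeasurableSet {p : ℝ × ℝ | p.1 ≤ a ∧ xp < p.1 + p.2} :=
        (measurableSet_le measurable_fst measurable_const).inter
          (measurableSet_lt measurable_const (measurable_fst.add measurable_snd))
      have hCpre : C n = (fun ω => (S n ω, I (n + 1) ω)) ⁻¹' {p : ℝ × ℝ | p.1 ≤ a ∧ xp < p.1 + p.2} := by
        ext ω
        simp only [hC, Set.mem_setOf_eq, Set.mem_preimage, hSsucc n ω]
      rw [hCpre, ← Measure.map_apply ((hSmeas n).prodMk (hmeas (n + 1))) hT, hpairlaw n,
        Measure.prod_apply hT]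
      have hslice : ∀ s : ℝ, (ProbabilityTheory.expMeasure lam)
          (Prod.mk s ⁻¹' {p : ℝ × ℝ | p.1 ≤ a ∧ xp < p.1 + p.2})
          = ENNReal.ofReal (Real.exp (-(lam * xp))) * Stmt14Aux.gfun lam 0 a s := by
        intro s
        by_cases hsa : s ≤ a
        · have hset : Prod.mk s ⁻¹' {p : ℝ × ℝ | p.1 ≤ a ∧ xp < p.1 + p.2} = Set.Ioi (xp - s) := by
            ext u
            simp only [Set.mem_preimage, Set.mem_setOf_eq, Set.mem_Ioi, hsa, true_and]
            constructor <;> intro hh <;> linarith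
          rw [hset, Stmt14Aux.expMeasure_Ioi hlam (by linarith : (0:ℝ) ≤ xp - s)]
          unfold Stmt14Aux.gfun
          rw [if_pos hsa, ← ENNReal.ofReal_mul (by positivity)]
          congr 1
          rw [pow_zero, one_mul, ← Real.exp_add]
          congr 1
          ring
        · have hset : Prod.mk s ⁻¹' {p : ℝ × ℝ | p.1 ≤ a ∧ xp < p.1 + p.2} = ∅ := by
            ext u
            simp [hsa]
          rw [hset, measure_empty]
          unfold Stmt14Aux.gfun
          rw [if_neg hsa, mul_zero]
      rw [lintegral_congr hslice,
        lintegral_const_mul _ (Stmt14Aux.gfun_measurable lam 0 a), hlaw n 0 a ha0,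
        ← ENNReal.ofReal_mul (by positivity)]
      congr 1
      norm_num
    rw [hμE]
    have hterm : ∀ n : ℕ, μ (C n) = ENNReal.ofReal
        (Real.exp (-(lam * xp)) * ((lam * a) ^ (n + 1) / ((n + 1).factorial))) := by
      intro n
      rw [hμC n, mul_pow]
    rw [tsum_congr hterm]
    have hnn : ∀ n : ℕ, 0 ≤ Real.exp (-(lam * xp)) * ((lam * a) ^ (n + 1) / ((n + 1).factorial)) := by
      intro n
      have h1 : (0:ℝ) ≤ (lam * a) ^ (n + 1) := pow_nonneg (mul_nonneg hlam.le ha0) _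
      exact mul_nonneg (Real.exp_pos _).le (div_nonneg h1 (Nat.cast_nonneg _))
    have hsummable : Summable (fun n : ℕ =>
        Real.exp (-(lam * xp)) * ((lam * a) ^ (n + 1) / ((n + 1).factorial))) := by
      have hs0 : Summable (fun m : ℕ => (lam * a) ^ m / (m.factorial : ℝ)) :=
        Real.summable_pow_div_factorial _
      have hs1 : Summable (fun n : ℕ => (lam * a) ^ (n + 1) / (((n + 1).factorial : ℕ) : ℝ)) :=
        (summable_nat_add_iff (f := fun m : ℕ => (lam * a) ^ m / (m.factorial : ℝ)) 1).2 hs0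
      exact hs1.mul_left _
    rw [← ENNReal.ofReal_tsum_of_nonneg hnn hsummable]
    have htsum : (∑' n : ℕ, Real.exp (-(lam * xp)) * ((lam * a) ^ (n + 1) / ((n + 1).factorial)))
        = Real.exp (-(lam * xp)) * (Real.exp (lam * a) - 1) := by
      rw [tsum_mul_left]
      congr 1
      have hexp : Real.exp (lam * a) = ∑' n : ℕ, (lam * a) ^ n / n.factorial := by
        rw [Real.exp_eq_exp_ℝ, NormedSpace.exp_eq_tsum_div]
      have hzadd := Summable.tsum_eq_zero_add (Real.summable_pow_div_factorial (lam * a))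
      rw [← hexp] at hzadd
      simp only [pow_zero, Nat.factorial_zero, Nat.cast_one, div_one] at hzadd
      linarith
    rw [htsum]
    have h1exp : 1 ≤ Real.exp (lam * a) := Real.one_le_exp (mul_nonneg hlam.le ha0)
    rw [ENNReal.toReal_ofReal (by nlinarith [Real.exp_pos (-(lam * xp)) ])]
    have hfin : Real.exp (-(lam * (R - y))) = Real.exp (-(lam * xp)) * Real.exp (lam * a) := by
      rw [← Real.exp_add]
      congr 1
      rw [ha]
      ring
    rw [hfin]
    ring
  exact ⟨part1, part2⟩
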